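/- Fix q > 0 and define V(d) = d - d²/(6q) for 0 ≤ d ≤ 4q, and V(d) = d - d²/(6q) + ((d-4q)/(6q))·√d·√(d-4q) for d > 4q. Then V attains its unique global maximum on (0,∞) at d = 3q, with V(3q) = 3q/2. -/

import Mathlib

/-- The benefit of expanding knowledge to distance `d` beyond the frontier. -/
noncomputable def Vexp (q d : ℝ) : ℝ :=
  if d ≤ 4 * q then d - d ^ 2 / (6 * q)
  else d - d ^ 2 / (6 * q) + (d - 4 * q) / (6 * q) * Real.sqrt d * Real.sqrt (d - 4 * q)

/-- `V` attains its unique global maximum on `(0,∞)` at `d = 3q`, with `V(3q) = 3q/2`. -/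
theorem Vexp_max (q : ℝ) (hq : 0 < q) :
    Vexp q (3 * q) = 3 * q / 2 ∧
    ∀ d : ℝ, 0 < d → d ≠ 3 * q → Vexp q d < Vexp q (3 * q) := by
  have hval : Vexp q (3 * q) = 3 * q / 2 := by
    unfold Vexp
    rw [if_pos (by nlinarith)]
    field_simp
    ring
  refine ⟨hval, fun d hd hne => ?_⟩
  rw [hval]
  unfold Vexp
  by_cases h : d ≤ 4 * q
  · rw [if_pos h]
    have h3 : (d - 3 * q) ^ 2 > 0 := by
      have : d - 3 * q ≠ 0 := sub_ne_zero.mpr hne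
      positivity
    have h6 : (0:ℝ) < 6 * q := by linarith
    rw [show d - d ^ 2 / (6 * q) = (6 * q * d - d ^ 2) / (6 * q) by field_simp,
      div_lt_div_iff₀ h6 (by norm_num : (0:ℝ) < 2)]
    nlinarith
  · rw [if_neg h]
    push_neg at h
    have hd4 : 0 < d - 4 * q := by linarith
    have hsq : Real.sqrt d * Real.sqrt (d - 4 * q) = Real.sqrt (d * (d - 4 * q)) :=
      (Real.sqrt_mul hd.le _).symm
    have hlt : Real.sqrt (d * (d - 4 * q)) < d - 2 * q := by
      rw [Real.sqrt_lt' (by linarith)]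
      nlinarith
    have hpos : 0 < (d - 4 * q) / (6 * q) := by positivity
    have key : (d - 4 * q) / (6 * q) * Real.sqrt d * Real.sqrt (d - 4 * q)
        < (d - 4 * q) / (6 * q) * (d - 2 * q) := by
      rw [mul_assoc, hsq]
      exact (mul_lt_mul_iff_right₀ hpos).mpr hlt
    have : d - d ^ 2 / (6 * q) + (d - 4 * q) / (6 * q) * (d - 2 * q) = 4 * q / 3 := by
      field_simp
      ring
    linarith
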